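/- Let G be a (banner, C5)-free graph with an odd antihole A, and suppose some two vertices of A belong to a co-triangle of G. Then there is a homogeneous set H of G such that H contains A and no co-triangle of the subgraph of G induced by H contains two vertices of A. -/

import Mathlib

open SimpleGraph
open scoped Fin.NatCast Fin.IntCast Fin.CommRing

/-- The banner: a chordless 4-cycle 0-1-2-3-0 together with a fifth vertex 4
adjacent to exactly one vertex (vertex 0) of the cycle. -/
def banner : SimpleGraph (Fin 5) :=
  SimpleGraph.fromRel (fun i j =>
    (i = 0 ∧ j = 1) ∨ (i = 1 ∧ j = 2) ∨ (i = 2 ∧ j = 3) ∨ (i = 3 ∧ j = 0) ∨ (i = 0 ∧ j = 4))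

/-- A graph is banner-free if it has no induced subgraph isomorphic to the banner. -/
def BannerFree {V : Type*} (G : SimpleGraph V) : Prop := ¬ Nonempty (banner ↪g G)

/-- A graph is C5-free if it has no induced subgraph isomorphic to the chordless 5-cycle. -/
def C5Free {V : Type*} (G : SimpleGraph V) : Prop :=
  ¬ Nonempty (SimpleGraph.cycleGraph 5 ↪g G)

/-- A graph is odd-hole-free if it has no induced chordless cycle of odd length `n ≥ 5`
(odd holes are the odd chordless cycles with at least four, hence at least five, vertices). -/
def OddHoleFree {V : Type*} (G : SimpleGraph V) : Prop :=
  ∀ n : ℕ, 5 ≤ n → Odd n → ¬ Nonempty (SimpleGraph.cycleGraph n ↪g G)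

/-- `A` is an odd antihole of `G`: the subgraph induced by `A` is isomorphic to the
complement of a chordless cycle on an odd number `n ≥ 5` of vertices. -/
def IsOddAntihole {V : Type*} (G : SimpleGraph V) (A : Set V) : Prop :=
  ∃ n : ℕ, 5 ≤ n ∧ Odd n ∧ Nonempty ((SimpleGraph.cycleGraph n)ᶜ ≃g G.induce A)

/-- `H` is a homogeneous set of `G`: `2 ≤ |H| < |V(G)|` and every vertex outside `H`
is adjacent to all vertices of `H` or to none of them. -/
def IsHomogeneous {V : Type*} (G : SimpleGraph V) (H : Set V) : Prop :=
  2 ≤ H.ncard ∧ H ≠ Set.univ ∧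
    ∀ v ∉ H, (∀ h ∈ H, G.Adj v h) ∨ (∀ h ∈ H, ¬ G.Adj v h)

/-- A graph is perfect if every induced subgraph has chromatic number equal to
its clique number. -/
def IsPerfect {V : Type*} (G : SimpleGraph V) : Prop :=
  ∀ S : Set V, (G.induce S).chromaticNumber = ((G.induce S).cliqueNum : ℕ∞)

/-- A graph is perfectly divisible if every induced subgraph `G[S]` contains a set `X`
of vertices meeting all largest cliques of `G[S]` and inducing a perfect graph. -/
def PerfectlyDivisible {V : Type*} (G : SimpleGraph V) : Prop :=
  ∀ S : Set V, ∃ X ⊆ S, IsPerfect (G.induce X) ∧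
    ∀ t : Finset V, ↑t ⊆ S → G.IsNClique ((G.induce S).cliqueNum) t → ∃ x ∈ X, x ∈ t

/-- A graph is `k`-divisible if the vertex set of each of its induced subgraphs `G[S]`
having at least one edge can be partitioned into `k` sets, none of which contains a
clique of size `ω(G[S])`.  (A graph with no edges is trivially `k`-divisible.) -/
def KDivisible {V : Type*} (G : SimpleGraph V) (k : ℕ) : Prop :=
  ∀ S : Set V, (∃ a ∈ S, ∃ b ∈ S, G.Adj a b) →
    ∃ P : Fin k → Set V, (∀ v ∈ S, ∃! i, v ∈ P i) ∧
      ∀ i, P i ⊆ S ∧ ¬ ∃ t : Finset V, ↑t ⊆ P i ∧ G.IsNClique ((G.induce S).cliqueNum) t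

/-- The maximum total weight `α_w(G)` of a stable (independent) set of the weighted
graph `G`; stable sets of `G` are exactly the cliques of the complement of `G`. -/
noncomputable def alphaW {V : Type*} (G : SimpleGraph V) (w : V → ℤ) : ℤ :=
  sSup {x : ℤ | ∃ s : Finset V, Gᶜ.IsClique (↑s : Set V) ∧ x = ∑ v ∈ s, w v}

/-- `C` is a clique cutset of the connected graph `G` if `C` is a clique and
deleting `C` from `G` leaves a disconnected graph. -/
def IsCliqueCutset {V : Type*} (G : SimpleGraph V) (C : Set V) : Prop :=
  G.Connected ∧ G.IsClique C ∧ ¬ (G.induce Cᶜ).Preconnected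


private def iso55 : SimpleGraph.cycleGraph 5 ≃g (SimpleGraph.cycleGraph 5)ᶜ :=
  ⟨⟨fun i => 2*i, fun i => 3*i, by decide, by decide⟩, by decide⟩


private lemma fin_ks (m : ℕ) : (1 : Fin (m+7)) ≠ 0 ∧ (2 : Fin (m+7)) ≠ 0 ∧ (3 : Fin (m+7)) ≠ 0
    ∧ (4 : Fin (m+7)) ≠ 0 ∧ (5 : Fin (m+7)) ≠ 0 ∧ (6 : Fin (m+7)) ≠ 0 := by
  have key : ∀ k : ℕ, 0 < k → k < m + 7 → ((k : ℕ) : Fin (m+7)) ≠ 0 := by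
    intro k h1 h2 h
    have := congrArg Fin.val h
    rw [Fin.val_cast_of_lt h2] at this
    simp at this
    omega
  refine ⟨?_, ?_, ?_, ?_, ?_, ?_⟩ <;>
    [skip; skip; skip; skip; skip; skip] <;>
    first
      | exact_mod_cast key 1 (by omega) (by omega)
      | exact_mod_cast key 2 (by omega) (by omega)
      | exact_mod_cast key 3 (by omega) (by omega)
      | exact_mod_cast key 4 (by omega) (by omega)
      | exact_mod_cast key 5 (by omega) (by omega)
      | exact_mod_cast key 6 (by omega) (by omega)

private lemma vadjH {V : Type*} {G : SimpleGraph V} {m : ℕ} {v : Fin (m+7) → V}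
    (hv : ∀ i j : Fin (m+7), G.Adj (v i) (v j) ↔ ¬(i = j ∨ i - j = 1 ∨ j - i = 1))
    (x y : Fin (m+7)) (h0 : x ≠ y) (h1 : x - y ≠ 1) (h2 : y - x ≠ 1) :
    G.Adj (v x) (v y) := by
  rw [hv]; rintro (h | h | h)
  exacts [h0 h, h1 h, h2 h]

private lemma vnadjH {V : Type*} {G : SimpleGraph V} {m : ℕ} {v : Fin (m+7) → V}
    (hv : ∀ i j : Fin (m+7), G.Adj (v i) (v j) ↔ ¬(i = j ∨ i - j = 1 ∨ j - i = 1))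
    (x y : Fin (m+7)) (h : x - y = 1 ∨ y - x = 1 ∨ x = y) :
    ¬ G.Adj (v x) (v y) := fun hA => ((hv x y).mp hA) (by tauto)

private lemma reach2 {m : ℕ} (hm : Even m) (T : Fin (m+7) → Prop)
    (hstep : ∀ x, T x → T (x + 2)) (t : Fin (m+7)) (ht : T t) (a : Fin (m+7)) : T a := by
  have hiter : ∀ k : ℕ, T (t + ((2*k : ℕ) : Fin (m+7))) := by
    intro k
    induction k with
    | zero => simpa using ht
    | succ k ih =>
      have heq : t + ((2*(k+1) : ℕ) : Fin (m+7)) = (t + ((2*k : ℕ) : Fin (m+7))) + 2 := by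
        push_cast; ring
      rw [heq]; exact hstep _ ih
  obtain ⟨j, hj⟩ := hm
  have key : ((m + 8 : ℕ) : Fin (m+7)) = 1 := by
    have h7 : ((m + 7 : ℕ) : Fin (m+7)) = 0 := Fin.natCast_self _
    calc ((m + 8 : ℕ) : Fin (m+7)) = ((m + 7 : ℕ) : Fin (m+7)) + 1 := by push_cast; ring
    _ = 1 := by rw [h7, zero_add]
  have h2k : ((2 * ((a - t).val * (j + 4)) : ℕ) : Fin (m+7)) = a - t := by
    have he : 2 * ((a - t).val * (j + 4)) = (a - t).val * (m + 8) := by rw [show m + 8 = 2*(j+4) from by omega]; ring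
    rw [he, Nat.cast_mul, key, mul_one, Fin.cast_val_eq_self]
  have h := hiter ((a - t).val * (j + 4))
  rwa [h2k, show t + (a - t) = a from by ring] at h

private lemma mkBanner {V : Type*} (G : SimpleGraph V) (a0 a1 a2 a3 a4 : V)
    (d01 : a0 ≠ a1) (d02 : a0 ≠ a2) (d03 : a0 ≠ a3) (d04 : a0 ≠ a4)
    (d12 : a1 ≠ a2) (d13 : a1 ≠ a3) (d14 : a1 ≠ a4)
    (d23 : a2 ≠ a3) (d24 : a2 ≠ a4) (d34 : a3 ≠ a4)
    (e01 : G.Adj a0 a1) (e12 : G.Adj a1 a2) (e23 : G.Adj a2 a3) (e30 : G.Adj a3 a0)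
    (e04 : G.Adj a0 a4)
    (n02 : ¬ G.Adj a0 a2) (n13 : ¬ G.Adj a1 a3) (n14 : ¬ G.Adj a1 a4)
    (n24 : ¬ G.Adj a2 a4) (n34 : ¬ G.Adj a3 a4) : Nonempty (banner ↪g G) := by
  refine ⟨⟨⟨![a0,a1,a2,a3,a4], ?_⟩, ?_⟩⟩
  · intro i j h
    fin_cases i <;> fin_cases j <;> simp_all
  · intro i j
    fin_cases i <;> fin_cases j <;>
      simp only [Matrix.cons_val_zero, Matrix.cons_val_one, Matrix.head_cons,
        Matrix.cons_val_two, Matrix.tail_cons, Matrix.cons_val_three, Matrix.cons_val_four,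
        Matrix.head_fin_const, Function.Embedding.coeFn_mk] <;>
      first
        | exact iff_of_false (G.loopless.irrefl _) (by rw [banner, SimpleGraph.fromRel_adj]; decide)
        | exact iff_of_true (by assumption) (by rw [banner, SimpleGraph.fromRel_adj]; decide)
        | exact iff_of_true (G.adj_symm (by assumption)) (by rw [banner, SimpleGraph.fromRel_adj]; decide)
        | exact iff_of_false (by assumption) (by rw [banner, SimpleGraph.fromRel_adj]; decide)
        | exact iff_of_false (fun h => (by assumption : ¬ _) (G.adj_symm h)) (by rw [banner, SimpleGraph.fromRel_adj]; decide)

private lemma aux_L1 {V : Type*} {G : SimpleGraph V} {m : ℕ} {v : Fin (m+7) → V} {A : Set V}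
    (hbf : BannerFree G)
    (hv : ∀ i j : Fin (m+7), G.Adj (v i) (v j) ↔ ¬(i = j ∨ i - j = 1 ∨ j - i = 1))
    (hinj : Function.Injective v) (hmem : ∀ i, v i ∈ A)
    (c : V) (hcA : c ∉ A) (i r : Fin (m+7))
    (h0 : ¬ G.Adj c (v i)) (h1 : ¬ G.Adj c (v (i+1))) (hr : G.Adj c (v r)) : False := by
  classical
  obtain ⟨hk1, hk2, hk3, hk4, hk5, hk6⟩ := fin_ks m
  -- find a base b with c ~ v b, c ≁ v (b+1), c ≁ v (b+2)
  obtain ⟨b, hb0, hb1, hb2⟩ : ∃ b : Fin (m+7),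
      G.Adj c (v b) ∧ ¬ G.Adj c (v (b+1)) ∧ ¬ G.Adj c (v (b+2)) := by
    have hPex : ∃ s : ℕ, G.Adj c (v (i + 1 - (s : ℕ))) :=
      ⟨(i + 1 - r).val, by rw [Fin.cast_val_eq_self, sub_sub_cancel]; exact hr⟩
    set t0 := Nat.find hPex with ht0def
    have ht0 : G.Adj c (v (i + 1 - (t0 : ℕ))) := Nat.find_spec hPex
    have h00 : ¬ G.Adj c (v (i + 1 - ((0:ℕ) : Fin (m+7)))) := by
      rw [show i + 1 - ((0:ℕ) : Fin (m+7)) = i + 1 from by push_cast; ring]; exact h1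
    have h01 : ¬ G.Adj c (v (i + 1 - ((1:ℕ) : Fin (m+7)))) := by
      rw [show i + 1 - ((1:ℕ) : Fin (m+7)) = i from by push_cast; ring]; exact h0
    have ht0ne0 : t0 ≠ 0 := by intro h; rw [h] at ht0; exact h00 ht0
    have ht0ne1 : t0 ≠ 1 := by intro h; rw [h] at ht0; exact h01 ht0
    refine ⟨i + 1 - (t0 : ℕ), ht0, ?_, ?_⟩
    · have heq : i + 1 - ((t0 : ℕ) : Fin (m+7)) + 1 = i + 1 - ((t0 - 1 : ℕ) : Fin (m+7)) := by
        rw [Nat.cast_sub (by omega : 1 ≤ t0), Nat.cast_one]; ring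
      rw [heq]
      exact Nat.find_min hPex (by omega)
    · by_cases h2 : t0 = 2
      · have heq : i + 1 - ((t0 : ℕ) : Fin (m+7)) + 2 = i + 1 := by
          rw [h2]; push_cast; ring
        rw [heq]; exact h1
      · have heq : i + 1 - ((t0 : ℕ) : Fin (m+7)) + 2 = i + 1 - ((t0 - 2 : ℕ) : Fin (m+7)) := by
          rw [Nat.cast_sub (by omega : 2 ≤ t0)]; push_cast; ring
        rw [heq]
        exact Nat.find_min hPex (by omega)
  -- distinctness and adjacency helpers
  have dcv : ∀ x : Fin (m+7), c ≠ v x := fun x h => hcA (by rw [h]; exact hmem x)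
  have dvc : ∀ x : Fin (m+7), v x ≠ c := fun x h => hcA (by rw [← h]; exact hmem x)
  -- the case tree
  by_cases h3 : G.Adj c (v (b+3))
  · by_cases h4 : G.Adj c (v (b+4))
    · -- leaf2 : (v(b+4), c, v(b+3), v(b+1), v(b+2))
      refine hbf (mkBanner G (v (b+4)) c (v (b+3)) (v (b+1)) (v (b+2))
        (dvc _) ?_ ?_ ?_ (dcv _) (dcv _) (dcv _) ?_ ?_ ?_
        h4.symm h3 ?_ ?_ ?_ ?_ hb1 hb2 ?_ ?_)
      · intro h; exact hk1 (by linear_combination hinj h)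
      · intro h; exact hk3 (by linear_combination hinj h)
      · intro h; exact hk2 (by linear_combination hinj h)
      · intro h; exact hk2 (by linear_combination hinj h)
      · intro h; exact hk1 (by linear_combination hinj h)
      · intro h; exact hk1 (by linear_combination - hinj h)
      · exact vadjH hv _ _ (fun h => hk2 (by linear_combination h))
          (fun h => hk1 (by linear_combination h)) (fun h => hk3 (by linear_combination -h))
      · exact vadjH hv _ _ (fun h => hk3 (by linear_combination -h))
          (fun h => hk4 (by linear_combination -h)) (fun h => hk2 (by linear_combination h))
      · exact vadjH hv _ _ (fun h => hk2 (by linear_combination h))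
          (fun h => hk1 (by linear_combination h)) (fun h => hk3 (by linear_combination -h))
      · exact vnadjH hv _ _ (Or.inl (by ring))
      · exact vnadjH hv _ _ (Or.inl (by ring))
      · exact vnadjH hv _ _ (Or.inr (Or.inl (by ring)))
    · by_cases h5 : G.Adj c (v (b+5))
      · -- leaf3b : (v(b+5), v(b+1), v(b+4), v(b+2), c)
        refine hbf (mkBanner G (v (b+5)) (v (b+1)) (v (b+4)) (v (b+2)) c
          ?_ ?_ ?_ (dvc _) ?_ ?_ (dvc _) ?_ (dvc _) (dvc _)
          ?_ ?_ ?_ ?_ h5.symm ?_ ?_ (fun h => hb1 h.symm) (fun h => h4 h.symm)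
          (fun h => hb2 h.symm))
        · intro h; exact hk4 (by linear_combination hinj h)
        · intro h; exact hk1 (by linear_combination hinj h)
        · intro h; exact hk3 (by linear_combination hinj h)
        · intro h; exact hk3 (by linear_combination - hinj h)
        · intro h; exact hk1 (by linear_combination - hinj h)
        · intro h; exact hk2 (by linear_combination hinj h)
        · exact vadjH hv _ _ (fun h => hk4 (by linear_combination h))
            (fun h => hk3 (by linear_combination h)) (fun h => hk5 (by linear_combination -h))
        · exact vadjH hv _ _ (fun h => hk3 (by linear_combination -h))
            (fun h => hk4 (by linear_combination -h)) (fun h => hk2 (by linear_combination h))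
        · exact vadjH hv _ _ (fun h => hk2 (by linear_combination h))
            (fun h => hk1 (by linear_combination h)) (fun h => hk3 (by linear_combination -h))
        · exact vadjH hv _ _ (fun h => hk3 (by linear_combination -h))
            (fun h => hk4 (by linear_combination -h)) (fun h => hk2 (by linear_combination h))
        · exact vnadjH hv _ _ (Or.inl (by ring))
        · exact vnadjH hv _ _ (Or.inr (Or.inl (by ring)))
      · -- leaf3a : (v b, v(b+4), v(b+1), v(b+5), c)
        refine hbf (mkBanner G (v b) (v (b+4)) (v (b+1)) (v (b+5)) c
          ?_ ?_ ?_ (dvc _) ?_ ?_ (dvc _) ?_ (dvc _) (dvc _)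
          ?_ ?_ ?_ ?_ hb0.symm ?_ ?_ (fun h => h4 h.symm) (fun h => hb1 h.symm)
          (fun h => h5 h.symm))
        · intro h; exact hk4 (by linear_combination - hinj h)
        · intro h; exact hk1 (by linear_combination - hinj h)
        · intro h; exact hk5 (by linear_combination - hinj h)
        · intro h; exact hk3 (by linear_combination hinj h)
        · intro h; exact hk1 (by linear_combination - hinj h)
        · intro h; exact hk4 (by linear_combination - hinj h)
        · exact vadjH hv _ _ (fun h => hk4 (by linear_combination -h))
            (fun h => hk5 (by linear_combination -h)) (fun h => hk3 (by linear_combination h))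
        · exact vadjH hv _ _ (fun h => hk3 (by linear_combination h))
            (fun h => hk2 (by linear_combination h)) (fun h => hk4 (by linear_combination -h))
        · exact vadjH hv _ _ (fun h => hk4 (by linear_combination -h))
            (fun h => hk5 (by linear_combination -h)) (fun h => hk3 (by linear_combination h))
        · exact vadjH hv _ _ (fun h => hk5 (by linear_combination h))
            (fun h => hk4 (by linear_combination h)) (fun h => hk6 (by linear_combination -h))
        · exact vnadjH hv _ _ (Or.inr (Or.inl (by ring)))
        · exact vnadjH hv _ _ (Or.inr (Or.inl (by ring)))
  · by_cases hm1 : G.Adj c (v (b-1))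
    · -- leaf4b : (v(b-1), c, v b, v(b+2), v(b+1))
      refine hbf (mkBanner G (v (b-1)) c (v b) (v (b+2)) (v (b+1))
        (dvc _) ?_ ?_ ?_ (dcv _) (dcv _) (dcv _) ?_ ?_ ?_
        hm1.symm hb0 ?_ ?_ ?_ ?_ hb2 hb1 ?_ ?_)
      · intro h; exact hk1 (by linear_combination - hinj h)
      · intro h; exact hk3 (by linear_combination - hinj h)
      · intro h; exact hk2 (by linear_combination - hinj h)
      · intro h; exact hk2 (by linear_combination - hinj h)
      · intro h; exact hk1 (by linear_combination - hinj h)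
      · intro h; exact hk1 (by linear_combination hinj h)
      · exact vadjH hv _ _ (fun h => hk2 (by linear_combination -h))
          (fun h => hk3 (by linear_combination -h)) (fun h => hk1 (by linear_combination h))
      · exact vadjH hv _ _ (fun h => hk3 (by linear_combination h))
          (fun h => hk2 (by linear_combination h)) (fun h => hk4 (by linear_combination -h))
      · exact vadjH hv _ _ (fun h => hk2 (by linear_combination -h))
          (fun h => hk3 (by linear_combination -h)) (fun h => hk1 (by linear_combination h))
      · exact vnadjH hv _ _ (Or.inr (Or.inl (by ring)))
      · exact vnadjH hv _ _ (Or.inr (Or.inl (by ring)))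
      · exact vnadjH hv _ _ (Or.inl (by ring))
    · -- leaf4a : (v b, v(b+2), v(b-1), v(b+3), c)
      refine hbf (mkBanner G (v b) (v (b+2)) (v (b-1)) (v (b+3)) c
        ?_ ?_ ?_ (dvc _) ?_ ?_ (dvc _) ?_ (dvc _) (dvc _)
        ?_ ?_ ?_ ?_ hb0.symm ?_ ?_ (fun h => hb2 h.symm) (fun h => hm1 h.symm)
        (fun h => h3 h.symm))
      · intro h; exact hk2 (by linear_combination - hinj h)
      · intro h; exact hk1 (by linear_combination hinj h)
      · intro h; exact hk3 (by linear_combination - hinj h)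
      · intro h; exact hk3 (by linear_combination hinj h)
      · intro h; exact hk1 (by linear_combination - hinj h)
      · intro h; exact hk4 (by linear_combination - hinj h)
      · exact vadjH hv _ _ (fun h => hk2 (by linear_combination -h))
          (fun h => hk3 (by linear_combination -h)) (fun h => hk1 (by linear_combination h))
      · exact vadjH hv _ _ (fun h => hk3 (by linear_combination h))
          (fun h => hk2 (by linear_combination h)) (fun h => hk4 (by linear_combination -h))
      · exact vadjH hv _ _ (fun h => hk4 (by linear_combination -h))
          (fun h => hk5 (by linear_combination -h)) (fun h => hk3 (by linear_combination h))
      · exact vadjH hv _ _ (fun h => hk3 (by linear_combination h))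
          (fun h => hk2 (by linear_combination h)) (fun h => hk4 (by linear_combination -h))
      · exact vnadjH hv _ _ (Or.inl (by ring))
      · exact vnadjH hv _ _ (Or.inr (Or.inl (by ring)))

private lemma aux_L2 {V : Type*} {G : SimpleGraph V} {m : ℕ} {v : Fin (m+7) → V} {A : Set V}
    (hbf : BannerFree G)
    (hv : ∀ i j : Fin (m+7), G.Adj (v i) (v j) ↔ ¬(i = j ∨ i - j = 1 ∨ j - i = 1))
    (hinj : Function.Injective v) (hmem : ∀ i, v i ∈ A) (hEven : Even m)
    (z mv : V) (hzA : z ∉ A) (hmvA : mv ∉ A) (hzanti : ∀ i, ¬ G.Adj z (v i))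
    (a0 t0 : Fin (m+7)) (hnbr : G.Adj mv (v a0)) (hnon : ¬ G.Adj mv (v t0))
    (hzm : G.Adj z mv) : False := by
  classical
  obtain ⟨hk1, hk2, hk3, hk4, hk5, hk6⟩ := fin_ks m
  have hnc : ∀ x : Fin (m+7), ¬ G.Adj mv (v x) → ¬ G.Adj mv (v (x+1)) → False :=
    fun x hx hx1 => aux_L1 hbf hv hinj hmem mv hmvA x a0 hx hx1 hnbr
  obtain ⟨t, hTt, hT2⟩ : ∃ t, ¬ G.Adj mv (v t) ∧ G.Adj mv (v (t-2)) := by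
    by_contra hcon
    push_neg at hcon
    have hstep : ∀ x : Fin (m+7), (¬ G.Adj mv (v (-x))) → ¬ G.Adj mv (v (-(x+2))) := by
      intro x hx
      have h := hcon _ hx
      rwa [show -x - 2 = -(x+2) from by ring] at h
    have hall := reach2 hEven (fun x => ¬ G.Adj mv (v (-x))) hstep (-t0)
      (by simpa using hnon) (-a0)
    simp only [neg_neg] at hall
    exact hall hnbr
  have ht1 : G.Adj mv (v (t+1)) := by
    by_contra hx; exact hnc t hTt hx
  have htm1 : G.Adj mv (v (t-1)) := by
    by_contra hx; refine hnc (t-1) hx ?_; rwa [show t - 1 + 1 = t from by ring]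
  have dmv : ∀ x : Fin (m+7), mv ≠ v x := fun x h => hmvA (by rw [h]; exact hmem x)
  have dvz : ∀ x : Fin (m+7), v x ≠ z := fun x h => hzA (by rw [← h]; exact hmem x)
  have dmz : mv ≠ z := fun h => hzanti a0 (h ▸ hnbr)
  have nzv : ∀ x : Fin (m+7), ¬ G.Adj (v x) z := fun x h => hzanti x h.symm
  by_cases h3 : G.Adj mv (v (t-3))
  · -- leaf2' : (mv, v(t-2), v t, v(t-3), z)
    refine hbf (mkBanner G mv (v (t-2)) (v t) (v (t-3)) z
      (dmv _) (dmv _) (dmv _) dmz ?_ ?_ (dvz _) ?_ (dvz _) (dvz _)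
      hT2 ?_ ?_ h3.symm hzm.symm hTt ?_ (nzv _) (nzv _) (nzv _))
    · intro h; exact hk2 (by linear_combination - hinj h)
    · intro h; exact hk1 (by linear_combination hinj h)
    · intro h; exact hk3 (by linear_combination hinj h)
    · exact vadjH hv _ _ (fun h => hk2 (by linear_combination -h))
        (fun h => hk3 (by linear_combination -h)) (fun h => hk1 (by linear_combination h))
    · exact vadjH hv _ _ (fun h => hk3 (by linear_combination h))
        (fun h => hk2 (by linear_combination h)) (fun h => hk4 (by linear_combination -h))
    · exact vnadjH hv _ _ (Or.inl (by ring))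
  · by_cases hu : ∃ u, ¬ G.Adj mv (v u) ∧ u ≠ t ∧ u ≠ t - 3
    · obtain ⟨u, hTu, hut, hut3⟩ := hu
      -- leaf3a' : (mv, v(t-2), v u, v(t-1), z)
      refine hbf (mkBanner G mv (v (t-2)) (v u) (v (t-1)) z
        (dmv _) (dmv _) (dmv _) dmz ?_ ?_ (dvz _) ?_ (dvz _) (dvz _)
        hT2 ?_ ?_ htm1.symm hzm.symm hTu ?_ (nzv _) (nzv _) (nzv _))
      · exact fun h => hTu (by rw [← hinj h]; exact hT2)
      · intro h; exact hk1 (by linear_combination - hinj h)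
      · exact fun h => hTu (by rw [hinj h]; exact htm1)
      · -- Adj (v (t-2)) (v u)
        rw [hv]; rintro (h | h | h)
        · exact hTu (by rw [← h]; exact hT2)
        · exact hut3 (by linear_combination -h)
        · exact hTu (by rw [show u = t - 1 from by linear_combination h]; exact htm1)
      · -- Adj (v u) (v (t-1))
        rw [hv]; rintro (h | h | h)
        · exact hTu (by rw [h]; exact htm1)
        · exact hut (by linear_combination h)
        · exact hTu (by rw [show u = t - 2 from by linear_combination -h]; exact hT2)
      · exact vnadjH hv _ _ (Or.inr (Or.inl (by ring)))
    · push_neg at hu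
      have h2' : G.Adj mv (v (t+2)) := by
        by_contra hc
        have hne : t + 2 ≠ t := fun h => hk2 (by linear_combination h)
        exact hk5 (by linear_combination hu (t+2) hc hne)
      have h3' : G.Adj mv (v (t+3)) := by
        by_contra hc
        have hne : t + 3 ≠ t := fun h => hk3 (by linear_combination h)
        exact hk6 (by linear_combination hu (t+3) hc hne)
      -- leaf3b' : (mv, v(t+2), v t, v(t+3), z)
      refine hbf (mkBanner G mv (v (t+2)) (v t) (v (t+3)) z
        (dmv _) (dmv _) (dmv _) dmz ?_ ?_ (dvz _) ?_ (dvz _) (dvz _)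
        h2' ?_ ?_ h3'.symm hzm.symm hTt ?_ (nzv _) (nzv _) (nzv _))
      · intro h; exact hk2 (by linear_combination hinj h)
      · intro h; exact hk1 (by linear_combination - hinj h)
      · intro h; exact hk3 (by linear_combination - hinj h)
      · exact vadjH hv _ _ (fun h => hk2 (by linear_combination h))
          (fun h => hk1 (by linear_combination h)) (fun h => hk3 (by linear_combination -h))
      · exact vadjH hv _ _ (fun h => hk3 (by linear_combination -h))
          (fun h => hk4 (by linear_combination -h)) (fun h => hk2 (by linear_combination h))
      · exact vnadjH hv _ _ (Or.inr (Or.inl (by ring)))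

private lemma aux_L3 {V : Type*} {G : SimpleGraph V} {m : ℕ} {v : Fin (m+7) → V} {A : Set V}
    (hbf : BannerFree G)
    (hv : ∀ i j : Fin (m+7), G.Adj (v i) (v j) ↔ ¬(i = j ∨ i - j = 1 ∨ j - i = 1))
    (hinj : Function.Injective v) (hmem : ∀ i, v i ∈ A) (hEven : Even m)
    (z e mv : V) (hzA : z ∉ A) (heA : e ∉ A) (hmvA : mv ∉ A)
    (hzanti : ∀ i, ¬ G.Adj z (v i)) (hecomp : ∀ i, G.Adj e (v i))
    (hze : G.Adj z e) (hzm : ¬ G.Adj z mv)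
    (a0 : Fin (m+7)) (hnbr : G.Adj mv (v a0)) (hem : ¬ G.Adj e mv) : False := by
  classical
  obtain ⟨hk1, hk2, hk3, hk4, hk5, hk6⟩ := fin_ks m
  have hnc : ∀ x : Fin (m+7), ¬ G.Adj mv (v x) → ¬ G.Adj mv (v (x+1)) → False :=
    fun x hx hx1 => aux_L1 hbf hv hinj hmem mv hmvA x a0 hx hx1 hnbr
  obtain ⟨x, hx0, hx1⟩ : ∃ x, G.Adj mv (v x) ∧ G.Adj mv (v (x+1)) := by
    by_contra hcon
    push_neg at hcon
    have hstep : ∀ y : Fin (m+7), ¬ G.Adj mv (v y) → ¬ G.Adj mv (v (y+2)) := by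
      intro y hy
      have h1' : G.Adj mv (v (y+1)) := by by_contra hc; exact hnc y hy hc
      have h2' := hcon (y+1) h1'
      rwa [show y + 1 + 1 = y + 2 from by ring] at h2'
    exact reach2 hEven (fun y => ¬ G.Adj mv (v y)) hstep (a0+1) (hcon a0 hnbr) a0 hnbr
  refine hbf (mkBanner G e (v x) mv (v (x+1)) z
    ?_ ?_ ?_ hze.ne' ?_ ?_ ?_ ?_ ?_ ?_
    (hecomp x) hx0.symm hx1 (hecomp (x+1)).symm hze.symm
    hem ?_ (fun h => hzanti x h.symm) (fun h => hzm h.symm)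
    (fun h => hzanti (x+1) h.symm))
  · exact fun h => heA (by rw [h]; exact hmem x)
  · exact fun h => hzm (h ▸ hze)
  · exact fun h => heA (by rw [h]; exact hmem (x+1))
  · exact fun h => hmvA (by rw [← h]; exact hmem x)
  · intro h; exact hk1 (by linear_combination - hinj h)
  · exact fun h => hzA (by rw [← h]; exact hmem x)
  · exact fun h => hmvA (by rw [h]; exact hmem (x+1))
  · exact fun h => hzanti a0 (h ▸ hnbr)
  · exact fun h => hzA (by rw [← h]; exact hmem (x+1))
  · exact vnadjH hv _ _ (Or.inr (Or.inl (by ring)))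

private lemma aux_third {V : Type*} {G : SimpleGraph V} {m : ℕ} {v : Fin (m+7) → V} {A : Set V}
    (hbf : BannerFree G)
    (hv : ∀ i j : Fin (m+7), G.Adj (v i) (v j) ↔ ¬(i = j ∨ i - j = 1 ∨ j - i = 1))
    (hinj : Function.Injective v) (hmem : ∀ i, v i ∈ A) (hsurj : ∀ a ∈ A, ∃ i, v i = a)
    (tri : Finset V) (htri : Gᶜ.IsNClique 3 tri) (a b : V) (hat : a ∈ tri) (hbt : b ∈ tri)
    (hab : a ≠ b) (haA : a ∈ A) (hbA : b ∈ A) :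
    ∃ c' ∈ tri, c' ∉ A ∧ ∀ i, ¬ G.Adj c' (v i) := by
  classical
  obtain ⟨hk1, hk2, hk3, hk4, hk5, hk6⟩ := fin_ks m
  have hnadj : ∀ x ∈ tri, ∀ y ∈ tri, x ≠ y → ¬ G.Adj x y := by
    intro x hx y hy hxy
    exact ((SimpleGraph.compl_adj G x y).mp
      (htri.1 (Finset.mem_coe.mpr hx) (Finset.mem_coe.mpr hy) hxy)).2
  have core : ∀ (p : Fin (m+7)) (x y : V), v p = x → v (p+1) = y → x ∈ tri → y ∈ tri →
      ∃ c' ∈ tri, c' ∉ A ∧ ∀ i, ¬ G.Adj c' (v i) := by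
    intro p x y hpx hpy hxt hyt
    have hxy : x ≠ y := by
      rw [← hpx, ← hpy]; intro h; exact hk1 (by linear_combination - hinj h)
    obtain ⟨c', hc'⟩ : ((tri.erase x).erase y).Nonempty := by
      rw [← Finset.card_pos, Finset.card_erase_of_mem (Finset.mem_erase.mpr ⟨hxy.symm, hyt⟩),
        Finset.card_erase_of_mem hxt, htri.2]
      omega
    have hc't : c' ∈ tri := Finset.mem_of_mem_erase (Finset.mem_of_mem_erase hc')
    have hc'y : c' ≠ y := (Finset.mem_erase.mp hc').1
    have hc'x : c' ≠ x := (Finset.mem_erase.mp (Finset.mem_of_mem_erase hc')).1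
    have hn1 : ¬ G.Adj c' (v p) := by rw [hpx]; exact hnadj c' hc't x hxt hc'x
    have hn2 : ¬ G.Adj c' (v (p+1)) := by rw [hpy]; exact hnadj c' hc't y hyt hc'y
    have hc'A : c' ∉ A := by
      intro hcA'
      obtain ⟨ic, hic⟩ := hsurj c' hcA'
      have hn1' : ¬ G.Adj (v ic) (v p) := by rw [hic]; exact hn1
      have hn2' : ¬ G.Adj (v ic) (v (p+1)) := by rw [hic]; exact hn2
      have hd1 : ic = p ∨ ic - p = 1 ∨ p - ic = 1 := by
        by_contra hno; exact hn1' ((hv ic p).mpr hno)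
      have hd2 : ic = p+1 ∨ ic - (p+1) = 1 ∨ (p+1) - ic = 1 := by
        by_contra hno; exact hn2' ((hv ic (p+1)).mpr hno)
      rcases hd1 with h | h | h
      · exact hc'x (by rw [← hic, h]; exact hpx)
      · exact hc'y (by rw [← hic, show ic = p + 1 from by linear_combination h]; exact hpy)
      · rcases hd2 with h' | h' | h'
        · exact hc'y (by rw [← hic, h']; exact hpy)
        · exact hk3 (by linear_combination - h - h')
        · exact hk1 (by linear_combination h' - h)
    refine ⟨c', hc't, hc'A, ?_⟩
    intro i0
    by_contra hadj
    exact aux_L1 hbf hv hinj hmem c' hc'A p i0 hn1 hn2 hadj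
  obtain ⟨ia, hia⟩ := hsurj a haA
  obtain ⟨ib, hib⟩ := hsurj b hbA
  have hnab : ¬ G.Adj (v ia) (v ib) := by rw [hia, hib]; exact hnadj a hat b hbt hab
  have hd : ia = ib ∨ ia - ib = 1 ∨ ib - ia = 1 := by
    by_contra hno; exact hnab ((hv ia ib).mpr hno)
  rcases hd with h | h | h
  · exact absurd (by rw [← hia, h]; exact hib) hab
  · exact core ib b a hib (by rw [show ib + 1 = ia from by linear_combination -h]; exact hia)
      hbt hat
  · exact core ia a b hia (by rw [show ia + 1 = ib from by linear_combination -h]; exact hib)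
      hat hbt

/-- Let `G` be a (banner, C5)-free graph with an odd antihole `A`, and
suppose some two vertices of `A` belong to a co-triangle of `G`.  Then there is a
homogeneous set `H` of `G` containing `A` such that no co-triangle of `G[H]` contains
two vertices of `A`. -/

theorem stmt_1 {V : Type*} [Fintype V] (G : SimpleGraph V)
    (hbf : BannerFree G) (hc5 : C5Free G)
    (A : Set V) (hA : IsOddAntihole G A)
    (hco : ∃ t : Finset V, Gᶜ.IsNClique 3 t ∧
      ∃ a ∈ t, ∃ b ∈ t, a ≠ b ∧ a ∈ A ∧ b ∈ A) :
    ∃ H : Set V, IsHomogeneous G H ∧ A ⊆ H ∧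
      ∀ t : Finset V, ↑t ⊆ H → Gᶜ.IsNClique 3 t →
        ∀ a ∈ t, ∀ b ∈ t, a ∈ A → b ∈ A → a = b := by
  classical
  obtain ⟨n, hn5, hodd, ⟨φ⟩⟩ := hA
  by_cases h5 : n = 5
  · exfalso
    subst h5
    exact hc5 ⟨(SimpleGraph.Embedding.induce A).comp ((φ.toEmbedding).comp iso55.toEmbedding)⟩
  obtain ⟨m, rfl⟩ : ∃ m, n = m + 7 := by
    obtain ⟨j, hj⟩ := hodd; exact ⟨n - 7, by omega⟩
  have hEven : Even m := by
    obtain ⟨j, hj⟩ := hodd; exact ⟨j - 3, by omega⟩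
  obtain ⟨hq1, hq2, hq3, hq4, hq5, hq6⟩ := fin_ks m
  set v : Fin (m+7) → V := fun i => ((φ i : A) : V) with hvdef
  have hmem : ∀ i, v i ∈ A := fun i => (φ i).2
  have hinj : Function.Injective v :=
    Subtype.val_injective.comp (φ.toEquiv.injective)
  have hv : ∀ i j : Fin (m+7), G.Adj (v i) (v j) ↔ ¬(i = j ∨ i - j = 1 ∨ j - i = 1) := by
    intro i j
    have h1 : (G.induce A).Adj (φ i) (φ j) ↔ ((SimpleGraph.cycleGraph (m+7))ᶜ).Adj i j :=
      φ.map_rel_iff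
    have h2 : (G.induce A).Adj (φ i) (φ j) ↔ G.Adj (v i) (v j) := Iff.rfl
    rw [← h2, h1, compl_adj]
    rw [show ((SimpleGraph.cycleGraph (m+7)).Adj i j ↔ i - j = 1 ∨ j - i = 1) from
      SimpleGraph.cycleGraph_adj]
    constructor
    · rintro ⟨hne, hnadj⟩ (h|h|h)
      · exact hne h
      · exact hnadj (Or.inl h)
      · exact hnadj (Or.inr h)
    · intro h
      exact ⟨fun he => h (Or.inl he), fun hc => h (Or.inr hc)⟩
  have hsurj : ∀ a ∈ A, ∃ i, v i = a := fun a ha => ⟨φ.symm ⟨a, ha⟩, by simp [hvdef]⟩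
  set Zp : V → Prop := fun x => x ∉ A ∧ ∀ i, ¬ G.Adj x (v i) with hZdef
  set Wp : V → Prop := fun x => (∀ i, G.Adj x (v i)) ∧ ∃ z, Zp z ∧ G.Adj z x with hWdef
  have hZanti : ∀ z h', Zp z → (¬ Zp h' ∧ ¬ Wp h') → ¬ G.Adj z h' := by
    intro z h' hz hH' hadj
    by_cases hhA : h' ∈ A
    · obtain ⟨i, hi⟩ := hsurj h' hhA
      rw [← hi] at hadj
      exact hz.2 i hadj
    · have hnbr : ∃ i, G.Adj h' (v i) := by
        by_contra hcon; push_neg at hcon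
        exact hH'.1 ⟨hhA, hcon⟩
      obtain ⟨i0, hi0⟩ := hnbr
      by_cases hmix : ∃ j, ¬ G.Adj h' (v j)
      · obtain ⟨j0, hj0⟩ := hmix
        exact aux_L2 hbf hv hinj hmem hEven z h' hz.1 hhA hz.2 i0 j0 hi0 hj0 hadj
      · push_neg at hmix
        exact hH'.2 ⟨hmix, z, hz, hadj⟩
  have hAin : ∀ a, a ∈ A → (¬ Zp a ∧ ¬ Wp a) := by
    intro a ha
    constructor
    · intro hz; exact hz.1 ha
    · intro hw
      obtain ⟨i, hi⟩ := hsurj a ha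
      exact G.loopless.irrefl a (hi ▸ hw.1 i)
  obtain ⟨tri, htri, a, hat, b, hbt, hab, haA, hbA⟩ := hco
  obtain ⟨c0, hc0t, hc0A, hc0anti⟩ :=
    aux_third hbf hv hinj hmem hsurj tri htri a b hat hbt hab haA hbA
  refine ⟨{x | ¬ Zp x ∧ ¬ Wp x}, ⟨?_, ?_, ?_⟩, ?_, ?_⟩
  · -- 2 ≤ ncard
    exact (Set.one_lt_ncard (Set.toFinite _)).mpr
      ⟨v 0, hAin _ (hmem 0), v 1, hAin _ (hmem 1),
        fun h => hq1 (by linear_combination - hinj h)⟩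
  · -- ≠ univ
    intro hU
    have hc0H : c0 ∈ ({x | ¬ Zp x ∧ ¬ Wp x} : Set V) := by rw [hU]; trivial
    exact hc0H.1 ⟨hc0A, hc0anti⟩
  · -- homogeneity
    intro x hx
    by_cases hzx : Zp x
    · right; intro h' hh'; exact hZanti x h' hzx hh'
    · have hwx : Wp x := by
        by_contra hwx; exact hx ⟨hzx, hwx⟩
      left; intro h' hh'
      by_cases hhA : h' ∈ A
      · obtain ⟨i, hi⟩ := hsurj h' hhA; rw [← hi]; exact hwx.1 i
      · obtain ⟨hcomp, z0, hz0, hz0x⟩ := hwx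
        have hz0h : ¬ G.Adj z0 h' := hZanti z0 h' hz0 hh'
        have hx_nA : x ∉ A := fun hxA => by
          obtain ⟨i, hi⟩ := hsurj x hxA
          exact G.loopless.irrefl x (hi ▸ hcomp i)
        have hnbr' : ∃ i, G.Adj h' (v i) := by
          by_contra hcon; push_neg at hcon; exact hh'.1 ⟨hhA, hcon⟩
        obtain ⟨i0, hi0⟩ := hnbr'
        by_contra hxh
        exact aux_L3 hbf hv hinj hmem hEven z0 x h' hz0.1 hx_nA hhA hz0.2 hcomp
          hz0x hz0h i0 hi0 hxh
  · -- A ⊆ H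
    intro a' ha'
    exact hAin a' ha'
  · -- co-triangle condition
    intro tri' htri'sub htri' a' ha't b' hb't ha'A hb'A
    by_contra hne
    obtain ⟨c', hc't, hc'A, hc'anti⟩ :=
      aux_third hbf hv hinj hmem hsurj tri' htri' a' b' ha't hb't hne ha'A hb'A
    have hc'H := htri'sub (Finset.mem_coe.mpr hc't)
    exact hc'H.1 ⟨hc'A, hc'anti⟩
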